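/- The isotypic component of L of the type of X — the sum of all G-submodules of L isomorphic to X as G-modules — equals the A^G-submodule generated by X, namely A^G·X := span_ℂ{D x : D ∈ A^G, x ∈ X}. (Intermediate claim in the proof of Theorem 2.2, part 1.) -/

import Mathlib

/-- Conjugation action of a group element on endomorphisms of `L`:
`g · T := ρ(g) ∘ T ∘ ρ(g)⁻¹`. -/
def conjEnd {G L : Type*} [Group G] [AddCommGroup L] [Module ℂ L]
    (ρ : Representation ℂ G L) (g : G) :
    Module.End ℂ L →ₗ[ℂ] Module.End ℂ L where
  toFun T := ρ g ∘ₗ T ∘ₗ ρ g⁻¹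
  map_add' T S := by ext v; simp
  map_smul' c T := by ext v; simp

open Polynomial in
/-- Dixmier's lemma: an endomorphism commuting with an irreducibly acting
algebra on a countable-dimensional complex space is a scalar. -/
lemma dixmier {L : Type*} [AddCommGroup L] [Module ℂ L]
    (hcount : ∃ s : Set L, s.Countable ∧ Submodule.span ℂ s = ⊤)
    (A : Subalgebra ℂ (Module.End ℂ L))
    (hAirr : ∀ p : Submodule ℂ L, (∀ T ∈ A, ∀ x ∈ p, T x ∈ p) → p = ⊥ ∨ p = ⊤)
    (S : Module.End ℂ L) (hS : ∀ T ∈ A, ∀ v : L, S (T v) = T (S v)) :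
    ∃ c : ℂ, S = c • (1 : Module.End ℂ L) := by
  by_cases htriv : Subsingleton L
  · exact ⟨0, LinearMap.ext fun v => Subsingleton.elim _ _⟩
  have : Nontrivial L := not_subsingleton_iff_nontrivial.mp htriv
  by_cases h1 : ∃ c : ℂ, LinearMap.ker (S - c • 1) = ⊤
  · obtain ⟨c, hc⟩ := h1
    exact ⟨c, by rwa [LinearMap.ker_eq_top, sub_eq_zero] at hc⟩
  push_neg at h1
  have hcomm : ∀ (c : ℂ), ∀ T ∈ A, ∀ x : L,
      (S - c • (1 : Module.End ℂ L)) (T x) = T ((S - c • 1) x) := by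
    intro c T hT x
    simp [LinearMap.sub_apply, hS T hT x, map_smul]
  -- every S - c is injective
  have hinj : ∀ c : ℂ, Function.Injective (S - c • (1 : Module.End ℂ L)) := by
    intro c
    rw [← LinearMap.ker_eq_bot]
    have hker : ∀ T ∈ A, ∀ x ∈ LinearMap.ker (S - c • (1 : Module.End ℂ L)),
        T x ∈ LinearMap.ker (S - c • (1 : Module.End ℂ L)) := by
      intro T hT x hx
      simp only [LinearMap.mem_ker] at hx ⊢
      rw [hcomm c T hT x, hx, map_zero]
    rcases hAirr _ hker with h | h
    · exact h
    · exact absurd h (h1 c)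
  have hsurj : ∀ c : ℂ, Function.Surjective (S - c • (1 : Module.End ℂ L)) := by
    intro c
    rw [← LinearMap.range_eq_top]
    have hrg : ∀ T ∈ A, ∀ x ∈ LinearMap.range (S - c • (1 : Module.End ℂ L)),
        T x ∈ LinearMap.range (S - c • (1 : Module.End ℂ L)) := by
      rintro T hT x ⟨y, rfl⟩
      exact ⟨T y, (hcomm c T hT y)⟩
    rcases hAirr _ hrg with h | h
    · exfalso
      apply h1 c
      rw [LinearMap.range_eq_bot] at h
      rw [h]; exact LinearMap.ker_zero
    · exact h
  -- the resolvent family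
  obtain ⟨v, hv⟩ := exists_ne (0 : L)
  let E : ℂ → (L ≃ₗ[ℂ] L) := fun c =>
    LinearEquiv.ofBijective (S - c • 1) ⟨hinj c, hsurj c⟩
  let u : ℂ → L := fun c => (E c).symm v
  have hu : ∀ c, (S - c • (1 : Module.End ℂ L)) (u c) = v := fun c =>
    (E c).apply_symm_apply v
  -- aeval of products of linear factors is injective
  have hXc : ∀ a : ℂ, aeval S (X - C a) = S - a • (1 : Module.End ℂ L) := by
    intro a; simp [Algebra.algebraMap_eq_smul_one]
  have hmul : ∀ m : Multiset ℂ,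
      Function.Injective (aeval S ((m.map fun r => X - C r).prod)) := by
    intro m
    induction m using Multiset.induction with
    | empty => simp [Function.Injective]
    | cons a m ih =>
        rw [Multiset.map_cons, Multiset.prod_cons, map_mul, hXc a]
        exact (hinj a).comp ih
  have haevalinj : ∀ p : ℂ[X], p ≠ 0 → Function.Injective (aeval S p) := by
    intro p hp
    have hsp : p = C p.leadingCoeff *
        (Multiset.map (fun a => X - C a) p.roots).prod :=
      (IsAlgClosed.splits p).eq_prod_roots
    rw [hsp, map_mul]
    have hc : aeval S (C p.leadingCoeff) = p.leadingCoeff • (1 : Module.End ℂ L) := by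
      simp [Algebra.algebraMap_eq_smul_one]
    rw [hc]
    intro x y hxy
    simp only [Module.End.mul_apply, LinearMap.smul_apply] at hxy
    have hlc : p.leadingCoeff ≠ 0 := leadingCoeff_ne_zero.mpr hp
    exact hmul _ (smul_right_injective L hlc hxy)
  -- linear independence of the resolvent family
  have hli : LinearIndependent ℂ u := by
    rw [linearIndependent_iff']
    intro s g hg i hi
    classical
    set p : ℂ[X] := ∑ k ∈ s, g k • ∏ j ∈ s.erase k, (X - C j) with hp
    have key : ∀ k ∈ s, (aeval S (∏ j ∈ s, (X - C j))) (u k) =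
        (aeval S (∏ j ∈ s.erase k, (X - C j))) v := by
      intro k hk
      have hsplit : (∏ j ∈ s, (X - C j)) =
          (∏ j ∈ s.erase k, (X - C j)) * (X - C k) :=
        (Finset.mul_prod_erase s _ hk).symm.trans (mul_comm _ _)
      rw [hsplit, map_mul]
      simp only [Module.End.mul_apply, hXc k, hu k]
    have hpv : (aeval S p) v = 0 := by
      have h0 : (aeval S (∏ j ∈ s, (X - C j))) (∑ k ∈ s, g k • u k) = 0 := by
        rw [hg, map_zero]
      rw [map_sum] at h0
      simp only [map_smul] at h0
      rw [hp, map_sum]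
      calc (∑ k ∈ s, aeval S (g k • ∏ j ∈ s.erase k, (X - C j))) v
          = ∑ k ∈ s, g k • (aeval S (∏ j ∈ s.erase k, (X - C j))) v := by
            simp [map_smul, LinearMap.sum_apply]
        _ = ∑ k ∈ s, g k • (aeval S (∏ j ∈ s, (X - C j))) (u k) := by
            refine Finset.sum_congr rfl fun k hk => ?_
            rw [key k hk]
        _ = 0 := h0
    have hp0 : p = 0 := by
      by_contra hne
      exact hv (haevalinj p hne (by rw [hpv, map_zero]))
    have hev : Polynomial.eval i p = g i * ∏ j ∈ s.erase i, (i - j) := by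
      rw [hp, Polynomial.eval_finset_sum]
      rw [Finset.sum_eq_single i]
      · simp [Polynomial.eval_prod, Polynomial.eval_smul, smul_eq_mul]
      · intro k hk hki
        have hz : Polynomial.eval i (∏ j ∈ s.erase k, (X - C j)) = 0 := by
          rw [Polynomial.eval_prod]
          refine Finset.prod_eq_zero (Finset.mem_erase.mpr ⟨hki.symm, hi⟩) ?_
          simp
        rw [Polynomial.eval_smul, hz, smul_zero]
      · intro h; exact absurd hi h
    have hprodne : ∏ j ∈ s.erase i, (i - j) ≠ 0 :=
      Finset.prod_ne_zero_iff.mpr fun j hj =>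
        sub_ne_zero.mpr (Ne.symm (Finset.mem_erase.mp hj).1)
    have hgz : g i * ∏ j ∈ s.erase i, (i - j) = 0 := by
      rw [← hev, hp0, Polynomial.eval_zero]
    exact (mul_eq_zero.mp hgz).resolve_right hprodne
  -- cardinality contradiction
  exfalso
  obtain ⟨s, hsc, hss⟩ := hcount
  have h2 : Module.rank ℂ L ≤ Cardinal.aleph0 := by
    have h3 := rank_span_le (R := ℂ) s
    rw [hss, rank_top] at h3
    exact h3.trans (Cardinal.mk_le_aleph0_iff.mpr hsc.to_subtype)
  have h3 := hli.cardinal_lift_le_rank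
  have h4 : Cardinal.mk ℂ ≤ Cardinal.aleph0 := by
    have h5 := h3.trans (Cardinal.lift_le.mpr h2)
    rw [Cardinal.lift_aleph0] at h5
    exact Cardinal.lift_le_aleph0.mp h5
  have : Countable ℂ := Cardinal.mk_le_aleph0_iff.mp h4
  have : Countable ℝ := Complex.ofReal_injective.countable
  exact not_countable this

open Polynomial in
lemma density {L : Type*} [AddCommGroup L] [Module ℂ L]
    (hcount : ∃ s : Set L, s.Countable ∧ Submodule.span ℂ s = ⊤)
    (A : Subalgebra ℂ (Module.End ℂ L))
    (hAirr : ∀ p : Submodule ℂ L, (∀ T ∈ A, ∀ x ∈ p, T x ∈ p) → p = ⊥ ∨ p = ⊤) :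
    ∀ (n : ℕ) (x : Fin n → L), LinearIndependent ℂ x → ∀ y : Fin n → L,
      ∃ T ∈ A, ∀ i, T (x i) = y i := by
  intro n
  induction n with
  | zero => exact fun x _ y => ⟨1, one_mem A, fun i => i.elim0⟩
  | succ n ih =>
    intro x hx y
    classical
    have hx' : LinearIndependent ℂ (x ∘ Fin.castSucc) :=
      hx.comp _ (Fin.castSucc_injective n)
    set xl := x (Fin.last n) with hxl
    let annS : Submodule ℂ (Module.End ℂ L) :=
      Subalgebra.toSubmodule A ⊓
        ⨅ i : Fin n, LinearMap.ker (LinearMap.applyₗ (x i.castSucc))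
    have hmemann : ∀ T : Module.End ℂ L,
        T ∈ annS ↔ T ∈ A ∧ ∀ i : Fin n, T (x i.castSucc) = 0 := by
      intro T
      simp [annS, Submodule.mem_inf, Submodule.mem_iInf, LinearMap.mem_ker,
        Subalgebra.mem_toSubmodule]
    let W : Submodule ℂ L := annS.map (LinearMap.applyₗ xl)
    have hWinv : ∀ T ∈ A, ∀ w ∈ W, T w ∈ W := by
      rintro T hT w ⟨a, ha, rfl⟩
      have ha' := (hmemann a).mp ha
      refine ⟨T * a, (hmemann _).mpr ⟨A.mul_mem hT ha'.1, fun i => ?_⟩, ?_⟩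
      · simp [Module.End.mul_apply, ha'.2 i]
      · simp [Module.End.mul_apply]
    rcases hAirr W hWinv with hW | hW
    · -- W = ⊥ : contradiction with linear independence
      exfalso
      have hwd : ∀ a ∈ A, ∀ b ∈ A,
          (∀ i : Fin n, a (x i.castSucc) = b (x i.castSucc)) → a xl = b xl := by
        intro a ha b hb h
        have hab : a - b ∈ annS :=
          (hmemann _).mpr ⟨A.sub_mem ha hb, fun i => by
            simp [LinearMap.sub_apply, h i]⟩
        have : (a - b) xl ∈ W := ⟨a - b, hab, rfl⟩
        rw [hW, Submodule.mem_bot] at this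
        simpa [LinearMap.sub_apply, sub_eq_zero] using this
      have hex : ∀ (i : Fin n) (v : L), ∃ T ∈ A,
          ∀ j : Fin n, T (x j.castSucc) = (Pi.single i v : Fin n → L) j := by
        intro i v
        obtain ⟨T, hT, hTv⟩ := ih (x ∘ Fin.castSucc) hx' (Pi.single i v : Fin n → L)
        exact ⟨T, hT, hTv⟩
      choose B hB1 hB2 using hex
      have hsingle : ∀ (T : Module.End ℂ L) (i : Fin n) (v : L) (j : Fin n),
          T ((Pi.single i v : Fin n → L) j) = (Pi.single i (T v) : Fin n → L) j := by
        intro T i v j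
        by_cases h : j = i
        · subst h; simp
        · simp [Pi.single_eq_of_ne h]
      have hsingle_add : ∀ (i j : Fin n) (u v : L),
          (Pi.single i (u + v) : Fin n → L) j = (Pi.single i u : Fin n → L) j + (Pi.single i v : Fin n → L) j := by
        intro i j u v
        by_cases h : j = i
        · subst h; simp
        · simp [Pi.single_eq_of_ne h]
      have hsingle_smul : ∀ (i j : Fin n) (cc : ℂ) (v : L),
          (Pi.single i (cc • v) : Fin n → L) j = cc • (Pi.single i v : Fin n → L) j := by
        intro i j cc v
        by_cases h : j = i
        · subst h; simp
        · simp [Pi.single_eq_of_ne h]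
      have hSadd : ∀ (i : Fin n) (u' v' : L),
          B i (u' + v') xl = B i u' xl + B i v' xl := by
        intro i u' v'
        have h := hwd (B i (u' + v')) (hB1 _ _) (B i u' + B i v')
          (A.add_mem (hB1 _ _) (hB1 _ _)) (fun j => by
            simp [LinearMap.add_apply, hB2, hsingle_add])
        simpa [LinearMap.add_apply] using h
      have hSsmul : ∀ (i : Fin n) (c : ℂ) (v' : L),
          B i (c • v') xl = c • B i v' xl := by
        intro i c v'
        have h := hwd (B i (c • v')) (hB1 _ _) (c • B i v')
          (Subalgebra.toSubmodule A |>.smul_mem c (hB1 _ _)) (fun j => by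
            simp [LinearMap.smul_apply, hB2, hsingle_smul])
        simpa [LinearMap.smul_apply] using h
      let Sop : Fin n → Module.End ℂ L := fun i =>
        { toFun := fun v => B i v xl
          map_add' := hSadd i
          map_smul' := hSsmul i }
      have hScomm : ∀ i : Fin n, ∀ T ∈ A, ∀ v : L,
          Sop i (T v) = T (Sop i v) := by
        intro i T hT v
        have h := hwd (B i (T v)) (hB1 _ _) (T * B i v)
          (A.mul_mem hT (hB1 _ _)) (fun j => by
            simp [Module.End.mul_apply, hB2, hsingle])
        exact (by simpa [Module.End.mul_apply] using h : B i (T v) xl = T (B i v xl))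
      have hc : ∀ i : Fin n, ∃ c : ℂ, Sop i = c • (1 : Module.End ℂ L) :=
        fun i => dixmier hcount A hAirr (Sop i) (hScomm i)
      choose c hcS using hc
      have key : ∀ a ∈ A, a xl = ∑ i : Fin n, c i • a (x i.castSucc) := by
        intro a ha
        have hsum : ∀ j : Fin n,
            (∑ i : Fin n, B i (a (x i.castSucc))) (x j.castSucc) =
              a (x j.castSucc) := by
          intro j
          rw [LinearMap.sum_apply]
          simp only [hB2]
          have h2 := congrFun (Finset.univ_sum_single
            (fun j : Fin n => a (x j.castSucc))) j
          simpa using h2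
        have h := hwd a ha (∑ i : Fin n, B i (a (x i.castSucc)))
          (sum_mem fun i _ => hB1 _ _) (fun j => (hsum j).symm)
        rw [h, LinearMap.sum_apply]
        refine Finset.sum_congr rfl fun i _ => ?_
        have : B i (a (x i.castSucc)) xl = Sop i (a (x i.castSucc)) := rfl
        rw [this, hcS i]
        simp
      have hxlval : xl = ∑ i : Fin n, c i • x i.castSucc := by
        have h := key 1 (one_mem A)
        simpa using h
      set g : Fin (n + 1) → ℂ := Fin.snoc (fun i => -(c i)) 1 with hg
      have hsum0 : ∑ i : Fin (n + 1), g i • x i = 0 := by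
        rw [Fin.sum_univ_castSucc]
        simp only [hg, Fin.snoc_castSucc, Fin.snoc_last, one_smul, neg_smul]
        rw [← hxl, hxlval, ← Finset.sum_add_distrib]
        simp
      have := Fintype.linearIndependent_iff.mp hx g hsum0 (Fin.last n)
      rw [hg] at this
      simp at this
    · -- W = ⊤ : build the operator
      obtain ⟨a, haA, hay⟩ := ih (x ∘ Fin.castSucc) hx' (y ∘ Fin.castSucc)
      have hmem : y (Fin.last n) - a xl ∈ W := by rw [hW]; trivial
      obtain ⟨b, hb, hbv⟩ := hmem
      replace hb := (hmemann b).mp hb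
      refine ⟨a + b, A.add_mem haA hb.1, fun i => ?_⟩
      refine Fin.lastCases ?_ (fun j => ?_) i
      · have hbv' : b xl = y (Fin.last n) - a xl := hbv
        simp [LinearMap.add_apply, ← hxl, hbv']
      · have := hay j
        simp only [Function.comp_apply] at this
        simp [LinearMap.add_apply, this, hb.2 j]

section Helpers

variable {G L : Type*} [Group G] [AddCommGroup L] [Module ℂ L]

lemma rho_inv_apply (ρ : Representation ℂ G L) (g : G) (v : L) :
    ρ g (ρ g⁻¹ v) = v := by
  have h : ρ g * ρ g⁻¹ = 1 := by rw [← map_mul, mul_inv_cancel, map_one]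
  calc ρ g (ρ g⁻¹ v) = (ρ g * ρ g⁻¹) v := rfl
    _ = v := by rw [h]; rfl

lemma rho_inv_apply' (ρ : Representation ℂ G L) (g : G) (v : L) :
    ρ g⁻¹ (ρ g v) = v := by
  have := rho_inv_apply ρ g⁻¹ v
  rwa [inv_inv] at this

lemma conjEnd_apply (ρ : Representation ℂ G L) (g : G) (T : Module.End ℂ L)
    (v : L) : conjEnd ρ g T v = ρ g (T (ρ g⁻¹ v)) := rfl

lemma comm_of_invariant (ρ : Representation ℂ G L) {D : Module.End ℂ L}
    (hD : ∀ g : G, conjEnd ρ g D = D) (g : G) (v : L) :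
    D (ρ g v) = ρ g (D v) := by
  have h := congrFun (congrArg (fun T : Module.End ℂ L => (T : L → L)) (hD g))
    (ρ g v)
  simp only [conjEnd_apply, rho_inv_apply' ρ g v] at h
  exact h.symm

end Helpers

/-- **Intermediate claim in the proof of Theorem 2.2, part 1.**
Let `X` be an irreducible `G`-invariant subspace of `L`.  The isotypic
component of `L` of the type of `X` — the supremum of all `G`-submodules of
`L` isomorphic to `X` as `G`-modules — equals the `A^G`-submodule generated
by `X`, namely the span of `{D x : D ∈ A^G, x ∈ X}`. -/
theorem isotypic_component_eq_invariant_orbit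
    {G L : Type*} [Group G] [AddCommGroup L] [Module ℂ L]
    (ρ : Representation ℂ G L)
    -- `L` has countable dimension
    (hcount : ∃ s : Set L, s.Countable ∧ Submodule.span ℂ s = ⊤)
    -- the `G`-action on `L` is locally finite
    (hlocfin : ∀ v : L, ∃ Y : Submodule ℂ L,
      (∀ g : G, ∀ y ∈ Y, ρ g y ∈ Y) ∧ FiniteDimensional ℂ Y ∧ v ∈ Y)
    -- the `G`-action on `L` is completely reducible
    (hcompred : ∀ p : Submodule ℂ L, (∀ g : G, ∀ y ∈ p, ρ g y ∈ p) →
      ∃ q : Submodule ℂ L, (∀ g : G, ∀ y ∈ q, ρ g y ∈ q) ∧ IsCompl p q)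
    (A : Subalgebra ℂ (Module.End ℂ L))
    -- `A` acts irreducibly on `L`
    (hAirr : ∀ p : Submodule ℂ L, (∀ T ∈ A, ∀ x ∈ p, T x ∈ p) → p = ⊥ ∨ p = ⊤)
    -- `A` is invariant under the conjugation `G`-action
    (hAG : ∀ g : G, ∀ T ∈ A, conjEnd ρ g T ∈ A)
    -- the `G`-action on `A` is locally finite
    (hAlocfin : ∀ T ∈ A, ∃ E : Submodule ℂ (Module.End ℂ L),
      E ≤ Subalgebra.toSubmodule A ∧ (∀ g : G, ∀ S ∈ E, conjEnd ρ g S ∈ E) ∧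
      FiniteDimensional ℂ E ∧ T ∈ E)
    -- the `G`-action on `A` is completely reducible
    (hAcompred : ∀ p : Submodule ℂ (Module.End ℂ L),
      p ≤ Subalgebra.toSubmodule A → (∀ g : G, ∀ S ∈ p, conjEnd ρ g S ∈ p) →
      ∃ q : Submodule ℂ (Module.End ℂ L), q ≤ Subalgebra.toSubmodule A ∧
        (∀ g : G, ∀ S ∈ q, conjEnd ρ g S ∈ q) ∧
        p ⊓ q = ⊥ ∧ p ⊔ q = Subalgebra.toSubmodule A)
    -- `X` is a nonzero `G`-invariant subspace of `L`, irreducible as a `G`-module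
    (X : Submodule ℂ L) (hXne : X ≠ ⊥)
    (hXinv : ∀ g : G, ∀ x ∈ X, ρ g x ∈ X)
    (hXirr : ∀ p : Submodule ℂ L, p ≤ X → (∀ g : G, ∀ x ∈ p, ρ g x ∈ p) →
      p = ⊥ ∨ p = X) :
    -- the isotypic component of the type of `X` equals `A^G·X`
    sSup {Y : Submodule ℂ L | (∀ g : G, ∀ y ∈ Y, ρ g y ∈ Y) ∧
        ∃ e : ↥X ≃ₗ[ℂ] ↥Y, ∀ (g : G) (x : ↥X),
          (↑(e ⟨ρ g ↑x, hXinv g ↑x x.2⟩) : L) = ρ g ↑(e x)} =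
      Submodule.span ℂ
        {y : L | ∃ D ∈ A, (∀ g : G, conjEnd ρ g D = D) ∧ ∃ x ∈ X, D x = y} := by
  classical
  apply le_antisymm
  · -- hard direction: each isotypic piece is inside A^G · X
    -- X is finite dimensional
    have hfin : FiniteDimensional ℂ ↥X := by
      obtain ⟨v, hvX, hv0⟩ := (Submodule.ne_bot_iff X).mp hXne
      obtain ⟨Y₀, hY₀inv, hY₀fd, hvY₀⟩ := hlocfin v
      have hsub : X ≤ Y₀ := by
        rcases hXirr (X ⊓ Y₀) inf_le_left
          (fun g x hx => ⟨hXinv g x hx.1, hY₀inv g x hx.2⟩) with h | h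
        · exfalso
          have hm : v ∈ X ⊓ Y₀ := ⟨hvX, hvY₀⟩
          rw [h] at hm
          exact hv0 hm
        · exact inf_eq_left.mp h
      exact Submodule.finiteDimensional_of_le hsub
    apply sSup_le
    rintro Y ⟨hYinv, e, he⟩
    let b := Module.finBasis ℂ ↥X
    have hxli : LinearIndependent ℂ (⇑X.subtype ∘ ⇑b) :=
      b.linearIndependent.map' X.subtype (Submodule.ker_subtype X)
    obtain ⟨T, hTA, hTv⟩ := density hcount A hAirr _ (⇑X.subtype ∘ ⇑b) hxli
      (fun i => ↑(e (b i)))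
    set f : ↥X →ₗ[ℂ] L := Y.subtype ∘ₗ (e : ↥X →ₗ[ℂ] ↥Y) with hf
    have hTf : T ∘ₗ X.subtype = f := b.ext fun i => by
      simpa [hf] using hTv i
    obtain ⟨E, hEA, hEinv, hEfd, hTE⟩ := hAlocfin T hTA
    set Φ : Module.End ℂ L →ₗ[ℂ] (↥X →ₗ[ℂ] L) := LinearMap.lcomp ℂ L X.subtype
      with hΦ
    have hΦapp : ∀ (S : Module.End ℂ L) (z : ↥X), Φ S z = S ↑z := by
      intro S z; rfl
    have hkerchar : ∀ S : Module.End ℂ L, Φ S = 0 ↔ ∀ z : ↥X, S ↑z = 0 := by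
      intro S
      constructor
      · intro h z
        have := congrFun (congrArg (fun q : ↥X →ₗ[ℂ] L => (q : ↥X → L)) h) z
        simpa [hΦapp] using this
      · intro h
        apply LinearMap.ext
        intro z
        simp [hΦapp, h z]
    set K : Submodule ℂ (Module.End ℂ L) := E ⊓ LinearMap.ker Φ with hK
    have hKA : K ≤ Subalgebra.toSubmodule A := le_trans inf_le_left hEA
    have hKinv : ∀ g : G, ∀ S ∈ K, conjEnd ρ g S ∈ K := by
      intro g S hS
      refine ⟨hEinv g S hS.1, ?_⟩
      show conjEnd ρ g S ∈ LinearMap.ker Φ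
      rw [LinearMap.mem_ker, hkerchar]
      intro z
      have hz : ρ g⁻¹ ↑z ∈ X := hXinv g⁻¹ ↑z z.2
      have h0 : S (ρ g⁻¹ ↑z) = 0 := (hkerchar S).mp hS.2 ⟨_, hz⟩
      rw [conjEnd_apply, h0, map_zero]
    obtain ⟨q, hqA, hqinv, hKq0, hKqtop⟩ := hAcompred K hKA hKinv
    have hTsup : T ∈ K ⊔ q := by rw [hKqtop]; exact hEA hTE
    obtain ⟨k, hk, w, hw, hkw⟩ := Submodule.mem_sup.mp hTsup
    have hwE : w ∈ E := by
      have hwe : w = T - k := by rw [← hkw]; abel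
      rw [hwe]
      exact sub_mem hTE hk.1
    have hΦw : Φ w = f := by
      have h1 : Φ T = f := hTf
      have h2 : Φ k = 0 := hk.2
      have h3 : Φ w = Φ T - Φ k := by
        rw [← map_sub]
        congr 1
        rw [← hkw]; abel
      rw [h3, h1, h2, sub_zero]
    have hwapp : ∀ z : ↥X, w ↑z = ↑(e z) := by
      intro z
      have := congrFun (congrArg (fun q : ↥X →ₗ[ℂ] L => (q : ↥X → L)) hΦw) z
      simpa [hΦapp, hf] using this
    have hwA : w ∈ A := hEA hwE
    have hwinv : ∀ g : G, conjEnd ρ g w = w := by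
      intro g
      have hdiffK : conjEnd ρ g w - w ∈ K := by
        refine ⟨sub_mem (hEinv g w hwE) hwE, ?_⟩
        show conjEnd ρ g w - w ∈ LinearMap.ker Φ
        rw [LinearMap.mem_ker, map_sub, sub_eq_zero, hΦw]
        apply LinearMap.ext
        intro z
        have hz : ρ g⁻¹ ↑z ∈ X := hXinv g⁻¹ ↑z z.2
        have h2 : w (ρ g⁻¹ ↑z) = ↑(e ⟨ρ g⁻¹ ↑z, hz⟩) := hwapp ⟨_, hz⟩
        have h3 : (↑(e ⟨ρ g⁻¹ ↑z, hz⟩) : L) = ρ g⁻¹ ↑(e z) := he g⁻¹ z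
        rw [hΦapp, conjEnd_apply, h2, h3, rho_inv_apply]
        simp [hf]
      have h0 : conjEnd ρ g w - w = 0 := by
        have hm : conjEnd ρ g w - w ∈ K ⊓ q :=
          ⟨hdiffK, sub_mem (hqinv g w hw) hw⟩
        rw [hKq0] at hm
        exact hm
      exact sub_eq_zero.mp h0
    intro yy hyy
    apply Submodule.subset_span
    refine ⟨w, hwA, hwinv, ↑(e.symm ⟨yy, hyy⟩), (e.symm ⟨yy, hyy⟩).2, ?_⟩
    rw [hwapp, LinearEquiv.apply_symm_apply]
  · -- easy direction: A^G · X is contained in the isotypic component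
    rw [Submodule.span_le]
    rintro y ⟨D, hDA, hDinv, x₀, hx₀, rfl⟩
    have hcomm : ∀ (g : G) (v : L), D (ρ g v) = ρ g (D v) :=
      comm_of_invariant ρ hDinv
    by_cases hker : X ⊓ LinearMap.ker D = X
    · have h0 : D x₀ = 0 := by
        have hm : x₀ ∈ X ⊓ LinearMap.ker D := by rw [hker]; exact hx₀
        exact hm.2
      rw [SetLike.mem_coe, h0]
      exact zero_mem _
    · have hbot : X ⊓ LinearMap.ker D = ⊥ := by
        have hinv2 : ∀ g : G, ∀ x ∈ X ⊓ LinearMap.ker D,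
            ρ g x ∈ X ⊓ LinearMap.ker D := by
          intro g x hx
          refine ⟨hXinv g x hx.1, ?_⟩
          show ρ g x ∈ LinearMap.ker D
          rw [LinearMap.mem_ker, hcomm g x, (LinearMap.mem_ker).mp hx.2,
            map_zero]
        rcases hXirr (X ⊓ LinearMap.ker D) inf_le_left hinv2 with h | h
        · exact h
        · exact absurd h hker
      set Y' := X.map D with hY'
      have hY'inv : ∀ g : G, ∀ v ∈ Y', ρ g v ∈ Y' := by
        rintro g v ⟨x, hx, rfl⟩
        exact ⟨ρ g x, hXinv g x hx, hcomm g x⟩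
      let dmap : ↥X →ₗ[ℂ] ↥Y' :=
        (D ∘ₗ X.subtype).codRestrict Y' (fun z => ⟨↑z, z.2, rfl⟩)
      have hbij : Function.Bijective dmap := by
        constructor
        · intro a b hab
          have h1 : D ↑a = D ↑b := congrArg Subtype.val hab
          have h2 : (↑a - ↑b : L) ∈ X ⊓ LinearMap.ker D :=
            ⟨sub_mem a.2 b.2, by
              show (↑a - ↑b : L) ∈ LinearMap.ker D
              rw [LinearMap.mem_ker, map_sub, h1, sub_self]⟩
          rw [hbot, Submodule.mem_bot, sub_eq_zero] at h2
          exact Subtype.ext h2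
        · rintro ⟨v, x, hx, rfl⟩
          exact ⟨⟨x, hx⟩, rfl⟩
      let e := LinearEquiv.ofBijective dmap hbij
      have hY'mem : Y' ∈ {Y : Submodule ℂ L | (∀ g : G, ∀ y ∈ Y, ρ g y ∈ Y) ∧
          ∃ e : ↥X ≃ₗ[ℂ] ↥Y, ∀ (g : G) (x : ↥X),
            (↑(e ⟨ρ g ↑x, hXinv g ↑x x.2⟩) : L) = ρ g ↑(e x)} := by
        refine ⟨hY'inv, e, ?_⟩
        intro g x
        show D (ρ g ↑x) = ρ g (D ↑x)
        exact hcomm g ↑x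
      exact le_sSup hY'mem ⟨x₀, hx₀, rfl⟩
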